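/- arXiv:2404.00651 — 3 statements merged into one kernel-verified Lean document; each statement's English description precedes it below -/
import Mathlib

section
/- Let M be a finite discounted MDP whose reward r takes values in [0, R_max], and let P̂ be a transition kernel with TV(P(·|s,a), P̂(·|s,a)) ≤ ε_m for all (s,a). Let W : S → [0, V_max] and H ≥ 1. Then for every start state s and every action sequence τ ∈ A^H, |J_P(s,τ) − J_{P̂}(s,τ)| ≤ R_max Σ_{t=0}^{H−1} γ^t t ε_m + γ^H H ε_m V_max, where J_P and J_{P̂} are the H-step values with terminal function W under the kernels P and P̂ respectively. -/
/-- The `H`-step value `J_Q(s, τ)` of executing the action sequence `τ` from `s`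
under the kernel `Q`, collecting discounted rewards `r` and the terminal value
`W` at the final state: `J_Q(s,τ) = E[∑_{t<H} γ^t r(s_t,a_t) + γ^H W(s_H)]`. -/
noncomputable def Jval {S A : Type*} [Fintype S] (γ : ℝ) (r : S → A → ℝ)
    (Q : S → A → S → ℝ) (W : S → ℝ) : (H : ℕ) → S → (Fin H → A) → ℝ
  | 0, s, _ => W s
  | H + 1, s, τ =>
      r s (τ 0) + γ * ∑ s', Q s (τ 0) s' * Jval γ r Q W H s' (fun i => τ i.succ)

/-- If the reward `r` takes values in `[0, Rmax]`, the kernels `P`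
and `Phat` satisfy `TV(P(·|s,a), Phat(·|s,a)) ≤ εm` everywhere, and abstractly the
terminal function `W` takes values in `[0, Vmax]`, then for every start state `s` and
every `H`-step action sequence `τ` (with `H ≥ 1`),
`|J_P(s,τ) - J_{Phat}(s,τ)| ≤ Rmax ∑_{t<H} γ^t t εm + γ^H H εm Vmax`. -/
theorem hstep_value_model_error_bound
    {S A : Type*} [Fintype S] [Fintype A] [Nonempty S] [Nonempty A]
    (P Phat : S → A → S → ℝ)
    (hP0 : ∀ s a s', 0 ≤ P s a s') (hP1 : ∀ s a, ∑ s', P s a s' = 1)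
    (hQ0 : ∀ s a s', 0 ≤ Phat s a s') (hQ1 : ∀ s a, ∑ s', Phat s a s' = 1)
    (γ : ℝ) (hγ0 : 0 ≤ γ) (hγ1 : γ < 1)
    (r : S → A → ℝ) (Rmax : ℝ) (hr : ∀ s a, 0 ≤ r s a ∧ r s a ≤ Rmax)
    (εm : ℝ) (hTV : ∀ s a, (1 / 2) * ∑ s', |P s a s' - Phat s a s'| ≤ εm)
    (W : S → ℝ) (Vmax : ℝ) (hW : ∀ s, 0 ≤ W s ∧ W s ≤ Vmax)
    (H : ℕ) (hH : 1 ≤ H) :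
    ∀ (s : S) (τ : Fin H → A),
      |Jval γ r P W H s τ - Jval γ r Phat W H s τ| ≤
        Rmax * ∑ t ∈ Finset.range H, γ ^ t * (t : ℝ) * εm
          + γ ^ H * (H : ℝ) * εm * Vmax := by
  obtain ⟨s₀⟩ := (inferInstance : Nonempty S)
  obtain ⟨a₀⟩ := (inferInstance : Nonempty A)
  have hε : 0 ≤ εm := by
    refine le_trans ?_ (hTV s₀ a₀)
    positivity
  have hR : 0 ≤ Rmax := le_trans (hr s₀ a₀).1 (hr s₀ a₀).2
  have hV : 0 ≤ Vmax := le_trans (hW s₀).1 (hW s₀).2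
  -- value bounds for any kernel
  have bounds : ∀ (Q : S → A → S → ℝ), (∀ s a s', 0 ≤ Q s a s') →
      (∀ s a, ∑ s', Q s a s' = 1) →
      ∀ (n : ℕ) (s : S) (τ : Fin n → A),
        0 ≤ Jval γ r Q W n s τ ∧
        Jval γ r Q W n s τ ≤ Rmax * ∑ t ∈ Finset.range n, γ ^ t + γ ^ n * Vmax := by
    intro Q h0 h1 n
    induction n with
    | zero =>
        intro s τ
        simpa [Jval] using hW s
    | succ n ih =>
        intro s τ
        constructor
        · have : 0 ≤ ∑ s', Q s (τ 0) s' * Jval γ r Q W n s' (fun i => τ i.succ) :=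
            Finset.sum_nonneg fun s' _ =>
              mul_nonneg (h0 _ _ _) (ih s' (fun i => τ i.succ)).1
          have := (hr s (τ 0)).1
          simp only [Jval]
          positivity
        · have hsum : ∑ s', Q s (τ 0) s' * Jval γ r Q W n s' (fun i => τ i.succ) ≤
              Rmax * ∑ t ∈ Finset.range n, γ ^ t + γ ^ n * Vmax := by
            calc ∑ s', Q s (τ 0) s' * Jval γ r Q W n s' (fun i => τ i.succ)
                ≤ ∑ s', Q s (τ 0) s' * (Rmax * ∑ t ∈ Finset.range n, γ ^ t + γ ^ n * Vmax) :=
                  Finset.sum_le_sum fun s' _ =>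
                    mul_le_mul_of_nonneg_left (ih s' (fun i => τ i.succ)).2 (h0 _ _ _)
              _ = Rmax * ∑ t ∈ Finset.range n, γ ^ t + γ ^ n * Vmax := by
                  rw [← Finset.sum_mul, h1, one_mul]
          have hrs := (hr s (τ 0)).2
          simp only [Jval]
          have hshift : ∑ t ∈ Finset.range (n + 1), γ ^ t =
              1 + γ * ∑ t ∈ Finset.range n, γ ^ t := by
            rw [Finset.sum_range_succ', Finset.mul_sum]
            simp only [pow_zero]
            rw [add_comm]
            congr 1
            exact Finset.sum_congr rfl fun i _ => by rw [pow_succ]; ring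
          rw [hshift]
          calc r s (τ 0) + γ * ∑ s', Q s (τ 0) s' * Jval γ r Q W n s' (fun i => τ i.succ)
              ≤ Rmax + γ * (Rmax * ∑ t ∈ Finset.range n, γ ^ t + γ ^ n * Vmax) :=
                add_le_add hrs (mul_le_mul_of_nonneg_left hsum hγ0)
            _ = Rmax * (1 + γ * ∑ t ∈ Finset.range n, γ ^ t) + γ ^ (n + 1) * Vmax := by
                rw [pow_succ]; ring
  -- the main induction
  have main : ∀ (n : ℕ) (s : S) (τ : Fin n → A),
      |Jval γ r P W n s τ - Jval γ r Phat W n s τ| ≤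
        Rmax * ∑ t ∈ Finset.range n, γ ^ t * (t : ℝ) * εm
          + γ ^ n * (n : ℝ) * εm * Vmax := by
    intro n
    induction n with
    | zero => intro s τ; simp [Jval]
    | succ n ih =>
        intro s τ
        set a := τ 0 with ha
        set JP : S → ℝ := fun s' => Jval γ r P W n s' (fun i => τ i.succ) with hJP
        set JQ : S → ℝ := fun s' => Jval γ r Phat W n s' (fun i => τ i.succ) with hJQ
        set M : ℝ := Rmax * ∑ t ∈ Finset.range n, γ ^ t + γ ^ n * Vmax with hM
        set B : ℝ := Rmax * ∑ t ∈ Finset.range n, γ ^ t * (t : ℝ) * εm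
          + γ ^ n * (n : ℝ) * εm * Vmax with hB
        have hM0 : 0 ≤ M := by
          have : (0:ℝ) ≤ ∑ t ∈ Finset.range n, γ ^ t :=
            Finset.sum_nonneg fun t _ => pow_nonneg hγ0 t
          positivity
        have hsub : ∑ s', (P s a s' - Phat s a s') = 0 := by
          rw [Finset.sum_sub_distrib, hP1, hQ1]; ring
        have hTV2 : ∑ s', |P s a s' - Phat s a s'| ≤ 2 * εm := by
          have := hTV s a; linarith
        -- decomposition of the difference of expectations
        have hdec : (∑ s', P s a s' * JP s') - (∑ s', Phat s a s' * JQ s') =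
            ∑ s', ((P s a s' - Phat s a s') * (JP s' - M / 2)
              + Phat s a s' * (JP s' - JQ s')) := by
          have h0 : ∑ s', (P s a s' - Phat s a s') * (M / 2) = 0 := by
            rw [← Finset.sum_mul, hsub, zero_mul]
          rw [← Finset.sum_sub_distrib,
            ← sub_zero (∑ s', (P s a s' * JP s' - Phat s a s' * JQ s')), ← h0,
            ← Finset.sum_sub_distrib]
          exact Finset.sum_congr rfl fun s' _ => by ring
        have hbound : |(∑ s', P s a s' * JP s') - (∑ s', Phat s a s' * JQ s')| ≤
            εm * M + B := by
          rw [hdec]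
          calc |∑ s', ((P s a s' - Phat s a s') * (JP s' - M / 2)
                + Phat s a s' * (JP s' - JQ s'))|
              ≤ ∑ s', |(P s a s' - Phat s a s') * (JP s' - M / 2)
                + Phat s a s' * (JP s' - JQ s')| := Finset.abs_sum_le_sum_abs _ _
            _ ≤ ∑ s', (|P s a s' - Phat s a s'| * (M / 2) + Phat s a s' * B) := by
                refine Finset.sum_le_sum fun s' _ => ?_
                refine le_trans (abs_add_le _ _) (add_le_add ?_ ?_)
                · rw [abs_mul]
                  refine mul_le_mul_of_nonneg_left ?_ (abs_nonneg _)
                  have h1 := (bounds P hP0 hP1 n s' (fun i => τ i.succ)).1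
                  have h2 := (bounds P hP0 hP1 n s' (fun i => τ i.succ)).2
                  rw [abs_le]
                  constructor <;> [linarith; linarith]
                · rw [abs_mul, abs_of_nonneg (hQ0 s a s')]
                  exact mul_le_mul_of_nonneg_left (ih s' (fun i => τ i.succ)) (hQ0 s a s')
            _ = (∑ s', |P s a s' - Phat s a s'|) * (M / 2)
                + (∑ s', Phat s a s') * B := by
                rw [Finset.sum_add_distrib, Finset.sum_mul, Finset.sum_mul]
            _ ≤ (2 * εm) * (M / 2) + 1 * B := by
                refine add_le_add (mul_le_mul_of_nonneg_right hTV2 (by linarith))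
                  (by rw [hQ1])
            _ = εm * M + B := by ring
        -- algebraic identity for the recursion
        have hident : Rmax * ∑ t ∈ Finset.range (n + 1), γ ^ t * (t : ℝ) * εm
            + γ ^ (n + 1) * ((n : ℝ) + 1) * εm * Vmax = γ * (εm * M + B) := by
          rw [hM, hB, Finset.sum_range_succ']
          have h : ∀ i ∈ Finset.range n, γ ^ (i + 1) * (((i : ℕ) + 1 : ℕ) : ℝ) * εm
              = γ * (εm * γ ^ i) + γ * (γ ^ i * (i : ℝ) * εm) := by
            intro i _; push_cast; rw [pow_succ]; ring
          rw [Finset.sum_congr rfl h, Finset.sum_add_distrib, ← Finset.mul_sum,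
            ← Finset.mul_sum, ← Finset.mul_sum, pow_succ]
          push_cast
          ring
        have hstep : Jval γ r P W (n + 1) s τ - Jval γ r Phat W (n + 1) s τ =
            γ * ((∑ s', P s a s' * JP s') - (∑ s', Phat s a s' * JQ s')) := by
          simp only [Jval, ← ha, ← hJP, ← hJQ]
          ring
        rw [hstep]
        push_cast
        rw [hident, abs_mul, abs_of_nonneg hγ0]
        exact mul_le_mul_of_nonneg_left (by simpa using hbound) hγ0
  intro s τ
  exact main H s τ
end

section
/- Let S and A be finite nonempty sets and let P and P̂ be transition kernels on S×A with TV(P(·|s,a), P̂(·|s,a)) ≤ ε_m for all (s,a). Fix a start state s_0 ∈ S and an action sequence (a_0,…,a_{t−1}) ∈ A^t. Let μ_t and μ̂_t be the probability mass functions of the state s_t obtained by executing these actions from s_0 under P and under P̂ respectively. Then TV(μ_t, μ̂_t) ≤ t ε_m. -/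
/-- The distribution `μ_t` of the state reached after executing the actions
`τ 0, …, τ (t-1)` from the start state `s0` under the transition kernel `Q`:
`μ_0 = δ_{s0}` and `μ_{k+1}(s') = ∑_s μ_k(s) Q(s'|s, τ k)`. -/
noncomputable def trajDist {S A : Type*} [Fintype S] [DecidableEq S]
    (Q : S → A → S → ℝ) : (t : ℕ) → S → (Fin t → A) → S → ℝ
  | 0, s0, _, s' => if s' = s0 then 1 else 0
  | t + 1, s0, τ, s' =>
      ∑ s, trajDist Q t s0 (fun i => τ i.castSucc) s * Q s (τ (Fin.last t)) s'

lemma trajDist_nonneg {S A : Type*} [Fintype S] [DecidableEq S]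
    (Q : S → A → S → ℝ) (hQ0 : ∀ s a s', 0 ≤ Q s a s') :
    ∀ (t : ℕ) (s0 : S) (τ : Fin t → A) (s' : S), 0 ≤ trajDist Q t s0 τ s'
  | 0, s0, _, s' => by simp [trajDist]; positivity
  | t + 1, s0, τ, s' => by
      rw [trajDist]
      exact Finset.sum_nonneg fun s _ =>
        mul_nonneg (trajDist_nonneg Q hQ0 t s0 _ s) (hQ0 _ _ _)

lemma trajDist_sum {S A : Type*} [Fintype S] [DecidableEq S]
    (Q : S → A → S → ℝ) (hQ1 : ∀ s a, ∑ s', Q s a s' = 1) :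
    ∀ (t : ℕ) (s0 : S) (τ : Fin t → A), ∑ s', trajDist Q t s0 τ s' = 1
  | 0, s0, _ => by simp [trajDist]
  | t + 1, s0, τ => by
      simp only [trajDist]
      rw [Finset.sum_comm]
      simp_rw [← Finset.mul_sum, hQ1, mul_one]
      exact trajDist_sum Q hQ1 t s0 _

/-- If two transition kernels `P` and `Phat` satisfy
`TV(P(·|s,a), Phat(·|s,a)) ≤ εm` for all `(s,a)`, then for any start state `s0`
and action sequence `τ ∈ A^t`, the state distributions `μ_t` and `μ̂_t` obtained
by executing these actions under `P` and `Phat` satisfy `TV(μ_t, μ̂_t) ≤ t εm`. -/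
theorem state_distribution_tv_bound
    {S A : Type*} [Fintype S] [DecidableEq S] [Fintype A] [Nonempty S] [Nonempty A]
    (P Phat : S → A → S → ℝ)
    (hP0 : ∀ s a s', 0 ≤ P s a s') (hP1 : ∀ s a, ∑ s', P s a s' = 1)
    (hQ0 : ∀ s a s', 0 ≤ Phat s a s') (hQ1 : ∀ s a, ∑ s', Phat s a s' = 1)
    (εm : ℝ) (hTV : ∀ s a, (1 / 2) * ∑ s', |P s a s' - Phat s a s'| ≤ εm)
    (t : ℕ) (s0 : S) (τ : Fin t → A) :
    (1 / 2) * ∑ s', |trajDist P t s0 τ s' - trajDist Phat t s0 τ s'|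
      ≤ (t : ℝ) * εm := by
  induction t with
  | zero => simp [trajDist]
  | succ t ih =>
    set a := τ (Fin.last t)
    set μ := trajDist P t s0 (fun i => τ i.castSucc)
    set ν := trajDist Phat t s0 (fun i => τ i.castSucc)
    have key : ∑ s', |trajDist P (t+1) s0 τ s' - trajDist Phat (t+1) s0 τ s'|
        ≤ (∑ s, |μ s - ν s|) + ∑ s, ν s * ∑ s', |P s a s' - Phat s a s'| := by
      calc ∑ s', |trajDist P (t+1) s0 τ s' - trajDist Phat (t+1) s0 τ s'|
          = ∑ s', |∑ s, ((μ s - ν s) * P s a s' + ν s * (P s a s' - Phat s a s'))| := by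
            simp only [trajDist]
            congr 1; funext s'
            congr 1
            rw [← Finset.sum_sub_distrib]
            congr 1; funext s; ring
        _ ≤ ∑ s', ∑ s, (|μ s - ν s| * P s a s' + ν s * |P s a s' - Phat s a s'|) := by
            apply Finset.sum_le_sum
            intro s' _
            refine (Finset.abs_sum_le_sum_abs _ _).trans (Finset.sum_le_sum fun s _ => ?_)
            refine (abs_add_le _ _).trans ?_
            rw [abs_mul, abs_mul, abs_of_nonneg (hP0 s a s'),
              abs_of_nonneg (trajDist_nonneg Phat hQ0 t s0 _ s)]
        _ = (∑ s, |μ s - ν s|) + ∑ s, ν s * ∑ s', |P s a s' - Phat s a s'| := by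
            rw [Finset.sum_comm]
            simp_rw [Finset.sum_add_distrib, ← Finset.mul_sum, hP1, mul_one]
    have hsum : ∑ s, ν s * ∑ s', |P s a s' - Phat s a s'| ≤ 2 * εm := by
      calc ∑ s, ν s * ∑ s', |P s a s' - Phat s a s'|
          ≤ ∑ s, ν s * (2 * εm) := by
            apply Finset.sum_le_sum
            intro s _
            apply mul_le_mul_of_nonneg_left _ (trajDist_nonneg Phat hQ0 t s0 _ s)
            have := hTV s a
            linarith
        _ = 2 * εm := by
            rw [← Finset.sum_mul, trajDist_sum Phat hQ1 t s0, one_mul]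
    have : ((t:ℝ)+1) * εm = (t:ℝ) * εm + εm := by ring
    push_cast
    rw [this]
    have := ih (fun i => τ i.castSucc)
    linarith
end

section
/- Let M be a finite discounted MDP whose reward r takes values in [0, R_max], let P̂ be a transition kernel with TV(P(·|s,a), P̂(·|s,a)) ≤ ε_m for all (s,a), let W : S → [0, V_max], and fix H ≥ 1. For each state s, let σ*(s) ∈ argmax_{τ∈A^H} J_P(s,τ) and let σ̂(s) ∈ A^H satisfy max_{τ∈A^H} J_{P̂}(s,τ) − J_{P̂}(s,σ̂(s)) ≤ ε_p, where J_P and J_{P̂} are the H-step values with terminal function W. Then for every state s, J_P(s, σ*(s)) − J_P(s, σ̂(s)) ≤ 2 ( R_max Σ_{t=0}^{H−1} γ^t t ε_m + γ^H H ε_m V_max ) + ε_p. -/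
lemma Jval_bounds {S A : Type*} [Fintype S] [Fintype A]
    (Q : S → A → S → ℝ) (hQ0 : ∀ s a s', 0 ≤ Q s a s')
    (hQ1 : ∀ s a, ∑ s', Q s a s' = 1)
    (γ : ℝ) (hγ0 : 0 ≤ γ)
    (r : S → A → ℝ) (Rmax : ℝ) (hr : ∀ s a, 0 ≤ r s a ∧ r s a ≤ Rmax)
    (W : S → ℝ) (Vmax : ℝ) (hW : ∀ s, 0 ≤ W s ∧ W s ≤ Vmax) :
    ∀ (H : ℕ) (s : S) (τ : Fin H → A),
      0 ≤ Jval γ r Q W H s τ ∧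
      Jval γ r Q W H s τ ≤ Rmax * ∑ t ∈ Finset.range H, γ ^ t + γ ^ H * Vmax := by
  intro H
  induction H with
  | zero => intro s τ; simpa [Jval] using hW s
  | succ H ih =>
    intro s τ
    have hs0 : 0 ≤ ∑ s', Q s (τ 0) s' * Jval γ r Q W H s' (fun i => τ i.succ) :=
      Finset.sum_nonneg fun s' _ => mul_nonneg (hQ0 _ _ _) (ih s' _).1
    constructor
    · have := (hr s (τ 0)).1
      show 0 ≤ r s (τ 0) + γ * ∑ s', Q s (τ 0) s' * Jval γ r Q W H s' (fun i => τ i.succ)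
      have := mul_nonneg hγ0 hs0
      linarith
    · show r s (τ 0) + γ * ∑ s', Q s (τ 0) s' * Jval γ r Q W H s' (fun i => τ i.succ) ≤ _
      have h1 : ∑ s', Q s (τ 0) s' * Jval γ r Q W H s' (fun i => τ i.succ)
          ≤ Rmax * ∑ t ∈ Finset.range H, γ ^ t + γ ^ H * Vmax := by
        calc ∑ s', Q s (τ 0) s' * Jval γ r Q W H s' (fun i => τ i.succ)
            ≤ ∑ s', Q s (τ 0) s' * (Rmax * ∑ t ∈ Finset.range H, γ ^ t + γ ^ H * Vmax) :=
              Finset.sum_le_sum fun s' _ =>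
                mul_le_mul_of_nonneg_left (ih s' _).2 (hQ0 _ _ _)
          _ = (∑ s', Q s (τ 0) s') * (Rmax * ∑ t ∈ Finset.range H, γ ^ t + γ ^ H * Vmax) := by
              rw [Finset.sum_mul]
          _ = _ := by rw [hQ1]; ring
      have h2 := (hr s (τ 0)).2
      have h3 := mul_le_mul_of_nonneg_left h1 hγ0
      rw [geom_sum_succ, pow_succ]
      nlinarith [h3]

lemma Jval_diff {S A : Type*} [Fintype S] [Fintype A] [Nonempty S] [Nonempty A]
    (P Phat : S → A → S → ℝ)
    (hP0 : ∀ s a s', 0 ≤ P s a s') (hP1 : ∀ s a, ∑ s', P s a s' = 1)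
    (hQ0 : ∀ s a s', 0 ≤ Phat s a s') (hQ1 : ∀ s a, ∑ s', Phat s a s' = 1)
    (γ : ℝ) (hγ0 : 0 ≤ γ)
    (r : S → A → ℝ) (Rmax : ℝ) (hr : ∀ s a, 0 ≤ r s a ∧ r s a ≤ Rmax)
    (εm : ℝ) (hTV : ∀ s a, (1 / 2) * ∑ s', |P s a s' - Phat s a s'| ≤ εm)
    (W : S → ℝ) (Vmax : ℝ) (hW : ∀ s, 0 ≤ W s ∧ W s ≤ Vmax) :
    ∀ (H : ℕ) (s : S) (τ : Fin H → A),
      |Jval γ r P W H s τ - Jval γ r Phat W H s τ|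
        ≤ Rmax * ∑ t ∈ Finset.range H, γ ^ t * (t : ℝ) * εm
            + γ ^ H * (H : ℝ) * εm * Vmax := by
  intro H
  induction H with
  | zero => intro s τ; simp [Jval]
  | succ H ih =>
    intro s τ
    set a := τ 0 with ha
    set τ' : Fin H → A := fun i => τ i.succ with hτ'
    set X : S → ℝ := fun s' => Jval γ r P W H s' τ' with hX
    set Y : S → ℝ := fun s' => Jval γ r Phat W H s' τ' with hY
    set B : ℝ := Rmax * ∑ t ∈ Finset.range H, γ ^ t + γ ^ H * Vmax with hB
    set D : ℝ := Rmax * ∑ t ∈ Finset.range H, γ ^ t * (t : ℝ) * εm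
        + γ ^ H * (H : ℝ) * εm * Vmax with hD
    have hXb : ∀ s', 0 ≤ X s' ∧ X s' ≤ B := fun s' =>
      Jval_bounds P hP0 hP1 γ hγ0 r Rmax hr W Vmax hW H s' τ'
    have hYb : ∀ s', 0 ≤ Y s' ∧ Y s' ≤ B := fun s' =>
      Jval_bounds Phat hQ0 hQ1 γ hγ0 r Rmax hr W Vmax hW H s' τ'
    have hB0 : 0 ≤ B := le_trans (hXb s).1 (hXb s).2
    have hYc : ∀ s', |Y s' - B / 2| ≤ B / 2 := fun s' =>
      abs_le.mpr ⟨by have := (hYb s').1; linarith, by have := (hYb s').2; linarith⟩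
    have hXY : ∀ s', |X s' - Y s'| ≤ D := fun s' => ih s' τ'
    have hid : ∑ s', P s a s' * X s' - ∑ s', Phat s a s' * Y s'
        = ∑ s', ((P s a s' - Phat s a s') * (Y s' - B / 2) + P s a s' * (X s' - Y s')) := by
      have e1 : ∑ s', ((P s a s' - Phat s a s') * (Y s' - B / 2) + P s a s' * (X s' - Y s'))
          = ∑ s', (P s a s' * X s' - Phat s a s' * Y s' - (P s a s' - Phat s a s') * (B / 2)) :=
        Finset.sum_congr rfl fun s' _ => by ring
      rw [e1, Finset.sum_sub_distrib, Finset.sum_sub_distrib, ← Finset.sum_mul,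
        Finset.sum_sub_distrib, hP1, hQ1]
      ring
    have hεm : ∑ s', |P s a s' - Phat s a s'| ≤ 2 * εm := by
      have := hTV s a; linarith
    have hεm0 : 0 ≤ εm := by
      have h0 : (0:ℝ) ≤ ∑ s', |P s a s' - Phat s a s'| :=
        Finset.sum_nonneg fun _ _ => abs_nonneg _
      linarith
    have key : |∑ s', P s a s' * X s' - ∑ s', Phat s a s' * Y s'| ≤ εm * B + D := by
      rw [hid]
      calc |∑ s', ((P s a s' - Phat s a s') * (Y s' - B / 2) + P s a s' * (X s' - Y s'))|
          ≤ ∑ s', |(P s a s' - Phat s a s') * (Y s' - B / 2) + P s a s' * (X s' - Y s')| :=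
            Finset.abs_sum_le_sum_abs _ _
        _ ≤ ∑ s', (|P s a s' - Phat s a s'| * (B / 2) + P s a s' * D) := by
            refine Finset.sum_le_sum fun s' _ => ?_
            calc |(P s a s' - Phat s a s') * (Y s' - B / 2) + P s a s' * (X s' - Y s')|
                ≤ |(P s a s' - Phat s a s') * (Y s' - B / 2)| + |P s a s' * (X s' - Y s')| :=
                  abs_add_le _ _
              _ ≤ |P s a s' - Phat s a s'| * (B / 2) + P s a s' * D := by
                  rw [abs_mul, abs_mul, abs_of_nonneg (hP0 s a s')]
                  gcongr
                  all_goals first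
                    | exact hYc s' | exact hXY s' | exact hP0 s a s' | positivity
        _ = (∑ s', |P s a s' - Phat s a s'|) * (B / 2) + (∑ s', P s a s') * D := by
            rw [Finset.sum_add_distrib, Finset.sum_mul, Finset.sum_mul]
        _ ≤ 2 * εm * (B / 2) + 1 * D := by
            rw [hP1]
            gcongr
        _ = εm * B + D := by ring
    have hJ : Jval γ r P W (H + 1) s τ - Jval γ r Phat W (H + 1) s τ
        = γ * (∑ s', P s a s' * X s' - ∑ s', Phat s a s' * Y s') := by
      show (r s a + γ * ∑ s', P s a s' * X s') - (r s a + γ * ∑ s', Phat s a s' * Y s')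
        = γ * (∑ s', P s a s' * X s' - ∑ s', Phat s a s' * Y s')
      ring
    have hsum : ∑ t ∈ Finset.range (H + 1), γ ^ t * (t : ℝ) * εm
        = γ * ∑ t ∈ Finset.range H, γ ^ t * (t : ℝ) * εm
          + (γ * εm) * ∑ t ∈ Finset.range H, γ ^ t := by
      rw [Finset.sum_range_succ']
      have e : ∀ t ∈ Finset.range H, γ ^ (t + 1) * ((t : ℕ) + 1 : ℕ) * εm
          = γ * (γ ^ t * (t : ℝ) * εm) + (γ * εm) * γ ^ t := by
        intro t _; push_cast; ring
      rw [Finset.sum_congr rfl e, Finset.sum_add_distrib, ← Finset.mul_sum, ← Finset.mul_sum]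
      push_cast; ring
    rw [hJ, abs_mul, abs_of_nonneg hγ0]
    have := mul_le_mul_of_nonneg_left key hγ0
    calc γ * |∑ s', P s a s' * X s' - ∑ s', Phat s a s' * Y s'| ≤ γ * (εm * B + D) := this
      _ = _ := by
        rw [hsum, hB, hD, pow_succ]
        push_cast
        ring

/-- Reward `r ∈ [0, Rmax]`, approximate kernel `Phat` with
`TV(P(·|s,a), Phat(·|s,a)) ≤ εm`, terminal function `W ∈ [0, Vmax]`, `H ≥ 1`.
If `σstar s` maximizes `τ ↦ J_P(s,τ)` and `σhat s` is `εp`-suboptimal for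
`τ ↦ J_{Phat}(s,τ)`, then for every state `s`,
`J_P(s, σstar s) - J_P(s, σhat s) ≤ 2 (Rmax ∑_{t<H} γ^t t εm + γ^H H εm Vmax) + εp`. -/
theorem planner_suboptimality_transfer_bound
    {S A : Type*} [Fintype S] [Fintype A] [Nonempty S] [Nonempty A]
    (P Phat : S → A → S → ℝ)
    (hP0 : ∀ s a s', 0 ≤ P s a s') (hP1 : ∀ s a, ∑ s', P s a s' = 1)
    (hQ0 : ∀ s a s', 0 ≤ Phat s a s') (hQ1 : ∀ s a, ∑ s', Phat s a s' = 1)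
    (γ : ℝ) (hγ0 : 0 ≤ γ) (hγ1 : γ < 1)
    (r : S → A → ℝ) (Rmax : ℝ) (hr : ∀ s a, 0 ≤ r s a ∧ r s a ≤ Rmax)
    (εm : ℝ) (hTV : ∀ s a, (1 / 2) * ∑ s', |P s a s' - Phat s a s'| ≤ εm)
    (W : S → ℝ) (Vmax : ℝ) (hW : ∀ s, 0 ≤ W s ∧ W s ≤ Vmax)
    (H : ℕ) (hH : 1 ≤ H)
    (εp : ℝ) (hεp : 0 ≤ εp)
    (σstar σhat : S → (Fin H → A))
    (hσstar : ∀ s τ, Jval γ r P W H s τ ≤ Jval γ r P W H s (σstar s))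
    (hσhat : ∀ s τ, Jval γ r Phat W H s τ ≤ Jval γ r Phat W H s (σhat s) + εp) :
    ∀ s, Jval γ r P W H s (σstar s) - Jval γ r P W H s (σhat s)
      ≤ 2 * (Rmax * ∑ t ∈ Finset.range H, γ ^ t * (t : ℝ) * εm
              + γ ^ H * (H : ℝ) * εm * Vmax) + εp := by
  intro s
  have hd := Jval_diff P Phat hP0 hP1 hQ0 hQ1 γ hγ0 r Rmax hr εm hTV W Vmax hW H
  have h1 := abs_le.mp (hd s (σstar s))
  have h2 := abs_le.mp (hd s (σhat s))
  have h3 := hσhat s (σstar s)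
  linarith [h1.1, h1.2, h2.1, h2.2]
end
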